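/- Let B ≥ 1, n ≥ 1 and k be integers, and let (p,q) ∈ Rat_B satisfy the C_n^k symmetry, i.e. the (α,β)-symmetry with α = 2π/n and β = 2πk/n. Then n divides B(B − k). -/

import Mathlib

open Polynomial Complex
open scoped Real

/-- `(p,q)` has the `(α,β)`-symmetry: `R(e^{iα} z) = M_β(R(z))` for `R = p/q`, where
`M_β` is the Möbius rotation by `β` about the `X`-axis. -/
def RotSymm (α β : ℝ) (p q : Polynomial ℂ) : Prop :=
  ∀ z : ℂ,
    p.eval (exp (I * α) * z) *
        (I * Real.sin (β / 2) * p.eval z + (Real.cos (β / 2) : ℂ) * q.eval z) =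
      q.eval (exp (I * α) * z) *
        ((Real.cos (β / 2) : ℂ) * p.eval z + I * Real.sin (β / 2) * q.eval z)

/-- If `(p,q) ∈ Rat_B` has the `C_n^k` symmetry, i.e. the
`(α,β)`-symmetry with `α = 2π/n` and `β = 2πk/n`, then `n` divides `B(B - k)`. -/
theorem cyclic_symmetry_divisibility (B n : ℕ) (k : ℤ) (hB : 1 ≤ B) (hn : 1 ≤ n)
    (p q : Polynomial ℂ)
    (hpm : p.Monic) (hpd : p.natDegree = B) (hqm : q.Monic) (hqd : q.natDegree = B)
    (hnoroot : ∀ z : ℂ, ¬(p.eval z = 0 ∧ q.eval z = 0))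
    (hsym : RotSymm (2 * π / n) (2 * π * k / n) p q) :
    (n : ℤ) ∣ (B : ℤ) * ((B : ℤ) - k) := by
  have hn0 : (n : ℂ) ≠ 0 := Nat.cast_ne_zero.mpr (by omega)
  have hπ : (π : ℂ) ≠ 0 := ofReal_ne_zero.mpr Real.pi_ne_zero
  set α : ℝ := 2 * π / n with hα
  set β : ℝ := 2 * π * k / n with hβ
  set c : ℂ := (Real.cos (β / 2) : ℂ) with hc
  set s : ℂ := (Real.sin (β / 2) : ℂ) with hs
  have hcs : c ^ 2 + s ^ 2 = 1 := by
    rw [hc, hs]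
    exact_mod_cast congrArg Complex.ofReal (Real.cos_sq_add_sin_sq (β / 2))
  set ω : ℂ := exp (I * α) with hω
  have hω0 : ω ≠ 0 := Complex.exp_ne_zero _
  set P : ℂ[X] := p.comp (C ω * X) with hP
  set Q : ℂ[X] := q.comp (C ω * X) with hQ
  set pt : ℂ[X] := C c * p + C (I * s) * q with hpt
  set qt : ℂ[X] := C (I * s) * p + C c * q with hqt
  have hp0 : p ≠ 0 := hpm.ne_zero
  have hq0 : q ≠ 0 := hqm.ne_zero
  have hPdeg : P.natDegree = B := by
    rw [hP, natDegree_comp, natDegree_C_mul hω0, natDegree_X, hpd, mul_one]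
  have hPlead : P.leadingCoeff = ω ^ B := by
    rw [hP, leadingCoeff_comp (by rw [natDegree_C_mul hω0, natDegree_X]; exact one_ne_zero)]
    rw [hpm.leadingCoeff, one_mul, leadingCoeff_C_mul_X, hpd]
  have hP0 : P ≠ 0 := fun h => by
    have := hPlead; rw [h, leadingCoeff_zero] at this
    exact pow_ne_zero B hω0 this.symm
  have hevP : ∀ z : ℂ, P.eval z = p.eval (ω * z) := by
    intro z; rw [hP, eval_comp, eval_mul, eval_C, eval_X]
  have hevQ : ∀ z : ℂ, Q.eval z = q.eval (ω * z) := by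
    intro z; rw [hQ, eval_comp, eval_mul, eval_C, eval_X]
  have key : P * qt = Q * pt := by
    apply Polynomial.funext
    intro z
    have h := hsym z
    simp only [eval_mul, eval_add, eval_C, hevP, hevQ, hpt, hqt]
    linear_combination h
  have hcop : IsCoprime P Q := by
    rw [Polynomial.isCoprime_iff_aeval_ne_zero_of_isAlgClosed (k := ℂ) ℂ]
    intro a
    have := hnoroot (ω * a)
    simp only [coe_aeval_eq_eval, hevP, hevQ]
    tauto
  have hdvd : P ∣ pt := by
    refine hcop.dvd_of_dvd_mul_left ⟨qt, ?_⟩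
    rw [← key]
  obtain ⟨u, hu⟩ := hdvd
  have hptdeg : pt.natDegree ≤ B := by
    rw [hpt]
    refine (natDegree_add_le _ _).trans (max_le ?_ ?_) <;>
      refine (natDegree_C_mul_le _ _).trans ?_
    · exact hpd.le
    · exact hqd.le
  have hμ : ∃ μ : ℂ, pt = C μ * P := by
    rcases eq_or_ne u 0 with h | h
    · exact ⟨0, by rw [hu, h, mul_zero, map_zero, zero_mul]⟩
    · have hdegu : u.natDegree = 0 := by
        have := natDegree_mul hP0 h
        rw [← hu] at this
        omega
      refine ⟨u.coeff 0, ?_⟩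
      rw [hu]
      conv_lhs => rw [eq_C_of_natDegree_eq_zero hdegu]
      exact mul_comm _ _
  obtain ⟨μ, hμ⟩ := hμ
  have hlead : μ * ω ^ B = c + I * s := by
    have h1 : pt.coeff B = c + I * s := by
      rw [hpt]
      simp only [coeff_add, coeff_C_mul]
      rw [show p.coeff B = 1 from hpd ▸ hpm.coeff_natDegree,
        show q.coeff B = 1 from hqd ▸ hqm.coeff_natDegree]
      ring
    have h2 : (C μ * P).coeff B = μ * ω ^ B := by
      rw [coeff_C_mul, show P.coeff B = P.leadingCoeff from (hPdeg ▸ rfl), hPlead]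
    rw [← h2, ← hμ, h1]
  have hqtQ : qt = C μ * Q := by
    have : P * qt = P * (C μ * Q) := by
      rw [key, hμ]; ring
    exact mul_left_cancel₀ hP0 this
  have e1 : c * p.eval 0 + I * s * q.eval 0 = μ * p.eval 0 := by
    have := congrArg (eval 0) hμ
    simp only [hpt, eval_add, eval_mul, eval_C, hevP, mul_zero] at this
    linear_combination this
  have e2 : I * s * p.eval 0 + c * q.eval 0 = μ * q.eval 0 := by
    have := congrArg (eval 0) hqtQ
    simp only [hqt, eval_add, eval_mul, eval_C, hevQ, mul_zero] at this
    linear_combination this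
  have hdet : (c - μ) ^ 2 + s ^ 2 = 0 := by
    have hD1 : ((c - μ) ^ 2 + s ^ 2) * p.eval 0 = 0 := by
      linear_combination (c - μ) * e1 - I * s * e2 + s ^ 2 * p.eval 0 * Complex.I_sq
    have hD2 : ((c - μ) ^ 2 + s ^ 2) * q.eval 0 = 0 := by
      linear_combination (c - μ) * e2 - I * s * e1 + s ^ 2 * q.eval 0 * Complex.I_sq
    rcases mul_eq_zero.mp hD1 with h | h
    · exact h
    rcases mul_eq_zero.mp hD2 with h' | h'
    · exact h'
    exact absurd ⟨h, h'⟩ (hnoroot 0)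
  have hprod : (c + I * s) * (c - I * s) = 1 := by
    linear_combination hcs - s ^ 2 * Complex.I_sq
  have he1ne : c + I * s ≠ 0 := by
    intro h
    rw [h, zero_mul] at hprod
    exact zero_ne_one hprod
  have hfac : (μ - (c + I * s)) * (μ - (c - I * s)) = 0 := by
    linear_combination hdet - s ^ 2 * Complex.I_sq
  have hcase : ω ^ B = 1 ∨ ω ^ B = (c + I * s) ^ 2 := by
    rcases mul_eq_zero.mp hfac with h | h
    · left
      rw [sub_eq_zero] at h
      rw [h] at hlead
      exact mul_left_cancel₀ he1ne (by rw [mul_one]; exact hlead)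
    · right
      rw [sub_eq_zero] at h
      rw [h] at hlead
      linear_combination (c + I * s) * hlead - ω ^ B * hprod
  have hωB : ω ^ B = exp ((B : ℂ) * (I * α)) := by
    rw [hω, Complex.exp_nat_mul]
  have he1exp : c + I * s = exp ((β / 2 : ℝ) * I) := by
    rw [Complex.exp_mul_I, hc, hs, Complex.ofReal_cos, Complex.ofReal_sin]
    ring
  have hαc : (α : ℂ) = 2 * π / n := by rw [hα]; push_cast; ring
  have hβc : (β : ℂ) = 2 * π * k / n := by rw [hβ]; push_cast; ring
  have h2πI : (2 * (π : ℂ) * I) ≠ 0 := by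
    simp [hπ, Complex.I_ne_zero, mul_ne_zero]
  rcases hcase with hcase | hcase
  · -- n ∣ B
    rw [hωB] at hcase
    obtain ⟨m, hm⟩ := Complex.exp_eq_one_iff.mp hcase
    have h2 : (B : ℂ) * (2 * π * I) = ((m : ℂ) * n) * (2 * π * I) := by
      field_simp [hαc] at hm
      have hαn : (α : ℂ) * n = 2 * π := by rw [hαc, div_mul_cancel₀ _ hn0]
      linear_combination ((n : ℂ) * I) * hm - (B : ℂ) * I * hαn
    have h3 : (B : ℤ) = m * n := by exact_mod_cast mul_right_cancel₀ h2πI h2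
    exact dvd_mul_of_dvd_left ⟨m, by rw [h3]; ring⟩ _
  · -- n ∣ B - k
    rw [hωB, he1exp] at hcase
    have hcase2 : exp ((B : ℂ) * (I * α)) = exp ((β : ℂ) * I) := by
      rw [hcase, sq, ← Complex.exp_add]
      congr 1
      push_cast
      ring
    obtain ⟨m, hm⟩ := Complex.exp_eq_exp_iff_exists_int.mp hcase2
    have h2 : ((B : ℂ) - k) * (2 * π * I) = ((m : ℂ) * n) * (2 * π * I) := by
      field_simp [hαc, hβc] at hm
      have hαn : (α : ℂ) * n = 2 * π := by rw [hαc, div_mul_cancel₀ _ hn0]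
      have hβn : (β : ℂ) * n = 2 * π * k := by rw [hβc, div_mul_cancel₀ _ hn0]
      linear_combination ((n : ℂ) * I) * hm - (B : ℂ) * I * hαn + I * hβn
    have h3 : (B : ℤ) - k = m * n := by exact_mod_cast mul_right_cancel₀ h2πI h2
    exact dvd_mul_of_dvd_right ⟨m, by rw [h3]; ring⟩ _
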